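/- arXiv:1709.07976 — 5 statements merged into one kernel-verified Lean document; each statement's English description precedes it below -/
import Mathlib

section
/- For the exponential distribution with rate parameter b > 0, the Chernoff information between the density f_Z(z) = b·e^{-bz} (z ≥ 0) and its shift f_Z(z - Δ) equals bΔ; that is, -min_{0≤s≤1} log ∫_Δ^∞ (f_Z(y))^s (f_Z(y-Δ))^{1-s} dy = bΔ. -/
open MeasureTheory Real Set

lemma exp_integral_Ioi (b Δ : ℝ) (hb : 0 < b) :
    (∫ y in Set.Ioi Δ, Real.exp (-(b * y))) = Real.exp (-(b * Δ)) / b := by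
  have := MeasureTheory.integral_comp_mul_left_Ioi (fun x => Real.exp (-x)) Δ hb
  simp only [smul_eq_mul, integral_exp_neg_Ioi] at this
  rw [this]
  field_simp

/-- Chernoff information between an exponential density with rate `b` and its
shift by `Δ` equals `b * Δ`. -/
theorem exp_chernoff_information (b Δ : ℝ) (hb : 0 < b) (hΔ : 0 < Δ) :
    -sInf ((fun s : ℝ =>
        Real.log (∫ y in Set.Ioi Δ,
          (b * Real.exp (-(b * y))) ^ s *
            (b * Real.exp (-(b * (y - Δ)))) ^ (1 - s))) '' Set.Icc (0:ℝ) 1)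
      = b * Δ := by
  have hfun : ∀ s : ℝ,
      Real.log (∫ y in Set.Ioi Δ,
          (b * Real.exp (-(b * y))) ^ s *
            (b * Real.exp (-(b * (y - Δ)))) ^ (1 - s)) = -(b * Δ) * s := by
    intro s
    have hint : (∫ y in Set.Ioi Δ,
        (b * Real.exp (-(b * y))) ^ s *
          (b * Real.exp (-(b * (y - Δ)))) ^ (1 - s))
        = Real.exp (-(b * Δ) * s) := by
      have heq : ∀ y : ℝ,
          (b * Real.exp (-(b * y))) ^ s *
            (b * Real.exp (-(b * (y - Δ)))) ^ (1 - s)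
          = (b * Real.exp (b * Δ * (1 - s))) * Real.exp (-(b * y)) := by
        intro y
        rw [Real.mul_rpow hb.le (Real.exp_pos _).le,
            Real.mul_rpow hb.le (Real.exp_pos _).le,
            ← Real.exp_mul, ← Real.exp_mul]
        have hbpow : (b : ℝ) ^ s * b ^ (1 - s) = b := by
          rw [← Real.rpow_add hb]; simp
        rw [show b ^ s * Real.exp (-(b * y) * s) *
            (b ^ (1 - s) * Real.exp (-(b * (y - Δ)) * (1 - s)))
            = (b ^ s * b ^ (1 - s)) *
              (Real.exp (-(b * y) * s) * Real.exp (-(b * (y - Δ)) * (1 - s))) by ring,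
          hbpow, ← Real.exp_add]
        rw [mul_assoc, ← Real.exp_add]
        ring_nf
      rw [MeasureTheory.setIntegral_congr_fun measurableSet_Ioi
        (fun y _ => heq y)]
      rw [MeasureTheory.integral_const_mul, exp_integral_Ioi b Δ hb]
      rw [show b * Real.exp (b * Δ * (1 - s)) * (Real.exp (-(b * Δ)) / b)
          = Real.exp (b * Δ * (1 - s)) * Real.exp (-(b * Δ)) by
        field_simp, ← Real.exp_add]
      congr 1
      ring
    rw [hint, Real.log_exp]
  have himg : ((fun s : ℝ =>
      Real.log (∫ y in Set.Ioi Δ,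
        (b * Real.exp (-(b * y))) ^ s *
          (b * Real.exp (-(b * (y - Δ)))) ^ (1 - s))) '' Set.Icc (0:ℝ) 1)
      = (fun s : ℝ => -(b * Δ) * s) '' Set.Icc (0:ℝ) 1 := by
    apply Set.image_congr
    intro s _
    exact hfun s
  rw [himg]
  have hbΔ : 0 < b * Δ := mul_pos hb hΔ
  have : sInf ((fun s : ℝ => -(b * Δ) * s) '' Set.Icc (0:ℝ) 1) = -(b * Δ) := by
    apply le_antisymm
    · apply csInf_le
      · refine ⟨-(b * Δ), ?_⟩
        rintro x ⟨s, hs, rfl⟩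
        dsimp only
        nlinarith [hs.1, hs.2]
      · exact ⟨1, ⟨zero_le_one, le_refl 1⟩, by ring⟩
    · apply le_csInf
      · exact ⟨0, 0, ⟨le_refl 0, zero_le_one⟩, by ring⟩
      · rintro x ⟨s, hs, rfl⟩
        dsimp only
        nlinarith [hs.1, hs.2]
  rw [this, neg_neg]
end

section
/- Let f_Z be a differentiable unimodal density on (0,∞) with positive mode m_Z > 0 and satisfying inf_{0 < z ≤ m_Z} f_Z(z) ≥ τ > 0 and sup_z f'_Z(z) < ∞. Then there exists a finite M_0 such that for all M > M_0 the density of the minimum of M i.i.d. samples, f_{Z_FA}(z) = M·f_Z(z)·(1-F_Z(z))^{M-1}, is weakly decreasing on (0,∞), hence unimodal. -/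
open Set

/-- Auxiliary: if `f` is antitone on `Ici m` and differentiable at `z > m`,
then its derivative at `z` is nonpositive. -/
lemma deriv_nonpos_of_antitoneOn_aux (f : ℝ → ℝ) (m z d : ℝ)
    (hanti : AntitoneOn f (Set.Ici m)) (hz : m < z) (hd : HasDerivAt f d z) : d ≤ 0 := by
  have htend : Filter.Tendsto (slope f z) (nhdsWithin z (Set.Ioi z)) (nhds d) := by
    have := hasDerivAt_iff_tendsto_slope.mp hd
    exact this.mono_left (nhdsWithin_mono z (by intro y hy; exact ne_of_gt hy))
  refine le_of_tendsto htend ?_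
  filter_upwards [self_mem_nhdsWithin] with y hy
  have hy' : z < y := hy
  have h1 : f y ≤ f z := hanti (le_of_lt hz) (le_of_lt (hz.trans hy')) (le_of_lt hy')
  have h2 : 0 < y - z := by linarith
  rw [slope_def_field]
  exact div_nonpos_of_nonpos_of_nonneg (by linarith) (le_of_lt h2)

/-- If `f` is a differentiable unimodal density on `(0,∞)` with mode `m > 0`,
bounded derivative, and bounded below by `τ > 0` on `(0, m]`, then there exists
`M₀` such that for all `M > M₀` the density of the minimum of `M` i.i.d. samples,
`z ↦ M · f z · (1 - F z)^(M-1)`, is weakly decreasing (hence unimodal) on `(0,∞)`. -/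
theorem min_density_eventually_unimodal
    (f F f' : ℝ → ℝ) (m τ C : ℝ) (hm : 0 < m) (hτ : 0 < τ)
    (hf0 : ∀ z, 0 ≤ f z)
    (hmono : MonotoneOn f (Set.Ioc (0:ℝ) m))
    (hanti : AntitoneOn f (Set.Ici m))
    (hlb : ∀ z ∈ Set.Ioc (0:ℝ) m, τ ≤ f z)
    (hderiv : ∀ z ∈ Set.Ioi (0:ℝ), HasDerivAt f (f' z) z)
    (hC : ∀ z ∈ Set.Ioi (0:ℝ), f' z ≤ C)
    (hFderiv : ∀ z ∈ Set.Ioi (0:ℝ), HasDerivAt F (f z) z)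
    (hFmono : Monotone F) (hF1 : ∀ z, F z ≤ 1) :
    ∃ M₀ : ℕ, ∀ M : ℕ, M₀ < M →
      AntitoneOn (fun z => (M : ℝ) * f z * (1 - F z) ^ (M - 1)) (Set.Ioi (0:ℝ)) := by
  set K : ℝ := max C 0 * (1 - F 0) with hK
  have hF0 : F 0 ≤ 1 := hF1 0
  have hKnn : 0 ≤ K := mul_nonneg (le_max_right _ _) (by linarith)
  refine ⟨⌈K / τ ^ 2⌉₊ + 1, fun M hM => ?_⟩
  have hM2 : 2 ≤ M := by omega
  -- the key pointwise inequality
  have key : ∀ z ∈ Set.Ioi (0:ℝ),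
      f' z * (1 - F z) ≤ ((M - 1 : ℕ) : ℝ) * f z ^ 2 := by
    intro z hz
    have hz0 : (0:ℝ) < z := hz
    have hp0 : 0 ≤ 1 - F z := by linarith [hF1 z]
    have hpB : 1 - F z ≤ 1 - F 0 := by linarith [hFmono hz0.le]
    have hn : (⌈K / τ ^ 2⌉₊ : ℝ) ≤ ((M - 1 : ℕ) : ℝ) := by
      exact_mod_cast Nat.le_sub_one_of_lt (by omega)
    rcases le_or_gt z m with hzm | hzm
    · -- z in (0, m]
      have hfz : τ ≤ f z := hlb z ⟨hz0, hzm⟩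
      have h1 : f' z * (1 - F z) ≤ max C 0 * (1 - F z) :=
        mul_le_mul_of_nonneg_right ((hC z hz).trans (le_max_left _ _)) hp0
      have h2 : max C 0 * (1 - F z) ≤ K :=
        mul_le_mul_of_nonneg_left hpB (le_max_right _ _)
      have h3 : K ≤ (⌈K / τ ^ 2⌉₊ : ℝ) * τ ^ 2 := by
        have := Nat.le_ceil (K / τ ^ 2)
        have hτ2 : (0:ℝ) < τ ^ 2 := by positivity
        calc K = K / τ ^ 2 * τ ^ 2 := by field_simp
          _ ≤ (⌈K / τ ^ 2⌉₊ : ℝ) * τ ^ 2 := by nlinarith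
      have h4 : (⌈K / τ ^ 2⌉₊ : ℝ) * τ ^ 2 ≤ ((M - 1 : ℕ) : ℝ) * f z ^ 2 := by
        have hτf : τ ^ 2 ≤ f z ^ 2 := by nlinarith
        have : (0:ℝ) ≤ (⌈K / τ ^ 2⌉₊ : ℝ) := Nat.cast_nonneg _
        nlinarith
      linarith
    · -- z > m : derivative nonpositive
      have hf'z : f' z ≤ 0 :=
        deriv_nonpos_of_antitoneOn_aux f m z (f' z) hanti hzm (hderiv z hz)
      have : f' z * (1 - F z) ≤ 0 := mul_nonpos_of_nonpos_of_nonneg hf'z hp0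
      have h5 : (0:ℝ) ≤ ((M - 1 : ℕ) : ℝ) * f z ^ 2 := by positivity
      linarith
  -- now apply the mean value theorem based criterion
  refine antitoneOn_of_hasDerivWithinAt_nonpos (convex_Ioi 0)
    (f' := fun z => (M : ℝ) * f' z * (1 - F z) ^ (M - 1) +
      ((M : ℝ) * f z) * (((M - 1 : ℕ) : ℝ) * (1 - F z) ^ (M - 1 - 1) * (-f z)))
    (fun z hz => ?_) (fun z hz => ?_) (fun z hz => ?_)
  · -- continuity
    have hz' : z ∈ Set.Ioi (0:ℝ) := hz
    exact ((continuousAt_const.mul (hderiv z hz').continuousAt).mul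
      ((continuousAt_const.sub (hFderiv z hz').continuousAt).pow _)).continuousWithinAt
  · -- derivative
    rw [interior_Ioi] at hz
    have h1 : HasDerivAt (fun z => (M : ℝ) * f z) ((M : ℝ) * f' z) z :=
      (hderiv z hz).const_mul _
    have h2 : HasDerivAt (fun z => 1 - F z) (-f z) z := (hFderiv z hz).const_sub 1
    have h3 := h2.pow (M - 1)
    exact ((h1.mul h3).congr_deriv (by push_cast; simp only [Pi.pow_apply])).hasDerivWithinAt
  · -- nonpositivity of the derivative
    rw [interior_Ioi] at hz
    have hkey := key z hz
    have hp0 : 0 ≤ 1 - F z := by linarith [hF1 z]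
    have hMn : (0:ℝ) ≤ (M : ℝ) := Nat.cast_nonneg _
    obtain ⟨k, hk⟩ : ∃ k, M - 1 = k + 1 := ⟨M - 2, by omega⟩
    have hk2 : M - 1 - 1 = k := by omega
    have hsplit : (1 - F z) ^ (M - 1) = (1 - F z) ^ (M - 1 - 1) * (1 - F z) := by
      rw [hk]; simp [pow_succ]
    show (M : ℝ) * f' z * (1 - F z) ^ (M - 1) +
      ((M : ℝ) * f z) * (((M - 1 : ℕ) : ℝ) * (1 - F z) ^ (M - 1 - 1) * (-f z)) ≤ 0
    rw [hsplit]
    have hq : (0:ℝ) ≤ (1 - F z) ^ (M - 1 - 1) := by positivity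
    nlinarith [mul_nonneg (mul_nonneg hMn hq) (sub_nonneg.2 hkey)]
end

section
/- Let Z_1,...,Z_M be i.i.d. with a unimodal density f_Z supported on [m_Z, ∞) for some m_Z ≥ 0 (so f_Z(z) = 0 for z < m_Z and f_Z is weakly decreasing on its support in the sense that f_Z(y) ≤ f_Z(y - Δ) for all y ≥ Δ > 0 when the mode equals m_Z = 0). Consider the binary hypothesis test X ∈ {0, Δ} with observations Y_m = X + Z_m. Then the maximum-likelihood decision based on (Y_1,...,Y_M) depends on the observations only through Y_FA = min_m Y_m: specifically, ML declares X̂ = 0 whenever some Y_m < Δ (equivalently Y_FA < Δ), and X̂ = Δ otherwise, and this rule achieves the same error probability as the ML detector based on Y_FA alone. -/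
open Finset

/-- For a zero-mode unimodal noise density `f` (supported on `[0,∞)` and weakly
decreasing there), the ML decision for the binary timing channel `Y_m = X + Z_m`,
`X ∈ {0, Δ}`, depends on the observations only through the first arrival
`min_m Y_m`: if some `Y_m < Δ` (equivalently `min_m Y_m < Δ`) the likelihood of
`X = 0` dominates, and otherwise the likelihood of `X = Δ` dominates. -/
theorem ml_equals_fa_zero_mode (M : ℕ) (hM : 0 < M) (Δ : ℝ) (hΔ : 0 < Δ)
    (f : ℝ → ℝ) (hf0 : ∀ z, 0 ≤ f z)
    (hsupp : ∀ z < (0:ℝ), f z = 0)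
    (hdec : AntitoneOn f (Set.Ici (0:ℝ)))
    (y : Fin M → ℝ) (hy : ∀ i, 0 ≤ y i) :
    ((∃ i, y i < Δ) ↔ Finset.univ.inf' (Finset.univ_nonempty_iff.mpr ⟨⟨0, hM⟩⟩) y < Δ) ∧
    ((∃ i, y i < Δ) → ∏ i, f (y i - Δ) ≤ ∏ i, f (y i)) ∧
    ((∀ i, Δ ≤ y i) → ∏ i, f (y i) ≤ ∏ i, f (y i - Δ)) := by
  refine ⟨?_, ?_, ?_⟩
  · constructor
    · rintro ⟨i, hi⟩
      exact lt_of_le_of_lt (Finset.inf'_le y (Finset.mem_univ i)) hi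
    · intro h
      obtain ⟨i, -, hi⟩ := Finset.exists_mem_eq_inf' _ y
      exact ⟨i, hi ▸ h⟩
  · rintro ⟨i, hi⟩
    have : f (y i - Δ) = 0 := hsupp _ (by linarith)
    calc ∏ j, f (y j - Δ) = 0 := Finset.prod_eq_zero (Finset.mem_univ i) this
    _ ≤ ∏ j, f (y j) := Finset.prod_nonneg fun j _ => hf0 _
  · intro h
    apply Finset.prod_le_prod (fun j _ => hf0 _)
    intro j _
    exact hdec (Set.mem_Ici.mpr (by linarith [h j])) (Set.mem_Ici.mpr (hy j)) (by linarith [hΔ.le])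
end

section
/- For an exponential random variable Z with rate b > 0 and rate function Λ*_Z(v) = bv - 1 - log(bv), the value α = (1 - e^{bΔ}(1 - bΔ)) / ((e^{bΔ} - 1)·b) satisfies the balancing equation Λ*_Z(μ + α) = Λ*_Z(μ - Δ + α), where μ = 1/b is the mean, provided 0 < Δ and μ - Δ + α > 0. -/
/-- For an exponential random variable with rate `b > 0`, mean `μ = 1/b` and rate
function `Λ*(v) = b v - 1 - log (b v)`, the value
`α = (1 - e^{bΔ}(1 - bΔ)) / ((e^{bΔ} - 1) b)` balances the two tails:
`Λ*(μ + α) = Λ*(μ - Δ + α)`. -/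
theorem exp_balancing_alpha (b Δ : ℝ) (hb : 0 < b) (hΔ : 0 < Δ)
    (Λstar : ℝ → ℝ) (hΛ : ∀ v > (0:ℝ), Λstar v = b * v - 1 - Real.log (b * v))
    (α : ℝ)
    (hα : α = (1 - Real.exp (b * Δ) * (1 - b * Δ)) / ((Real.exp (b * Δ) - 1) * b))
    (hpos : 0 < 1 / b - Δ + α) :
    Λstar (1 / b + α) = Λstar (1 / b - Δ + α) := by
  have hE1 : 1 < Real.exp (b * Δ) := by
    have := Real.add_one_lt_exp (ne_of_gt (mul_pos hb hΔ))
    nlinarith [mul_pos hb hΔ]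
  have hEne : Real.exp (b * Δ) - 1 ≠ 0 := by linarith
  have hy : 0 < b * (1 / b - Δ + α) := mul_pos hb hpos
  have hkey : b * (1 / b + α) = Real.exp (b * Δ) * (b * (1 / b - Δ + α)) := by
    rw [hα]
    field_simp
    ring
  have hx : 0 < 1 / b + α := by
    have : 0 < b * (1 / b + α) := by
      rw [hkey]; positivity
    nlinarith
  have hdiff : Real.exp (b * Δ) * (b * (1 / b - Δ + α)) = b * (1 / b - Δ + α) + b * Δ := by
    rw [← hkey]; ring
  rw [hΛ _ hx, hΛ _ hpos, hkey, Real.log_mul (Real.exp_ne_zero _) hy.ne', Real.log_exp]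
  linarith
end

section
/- Suppose f_Z is a continuous differentiable unimodal density on (0,∞) with lim_{z→0+} f_Z(z) = 0, f'_Z(z) ≥ 0 for 0 < z < ε, and the function g(z) = f'_Z(z)/f_Z(z)² is monotonically decreasing on (0, ε]. Then lim_{z→0+} f'_Z(z)(1 - F_Z(z))/f_Z(z)² = +∞, provided f'_Z does not vanish identically near 0. -/
open Set Filter

/-- If `f` is a differentiable density on `(0,∞)` with `f → 0` at `0⁺`, `f' > 0`
near `0`, and `g = f'/f²` monotonically decreasing on `(0, ε]`, then
`f'(z)(1 - F(z))/f(z)² → ∞` as `z → 0⁺`. -/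
theorem ratio_tendsto_atTop (f F f' : ℝ → ℝ) (ε : ℝ) (hε : 0 < ε)
    (hderiv : ∀ z ∈ Set.Ioo (0:ℝ) ε, HasDerivAt f (f' z) z)
    (hfpos : ∀ z ∈ Set.Ioo (0:ℝ) ε, 0 < f z)
    (hf'pos : ∀ z ∈ Set.Ioo (0:ℝ) ε, 0 < f' z)
    (hf0 : Tendsto f (nhdsWithin 0 (Set.Ioi 0)) (nhds 0))
    (hganti : AntitoneOn (fun z => f' z / (f z) ^ 2) (Set.Ioc (0:ℝ) ε))
    (hF0 : Tendsto F (nhdsWithin 0 (Set.Ioi 0)) (nhds 0))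
    (hFmono : Monotone F) (hF1 : ∀ z, F z ≤ 1) :
    Tendsto (fun z => f' z * (1 - F z) / (f z) ^ 2)
      (nhdsWithin 0 (Set.Ioi 0)) atTop := by
  set b : ℝ := ε / 2 with hbdef
  have hb : b ∈ Set.Ioo (0:ℝ) ε := ⟨by positivity, by simp [hbdef]; linarith⟩
  -- key lower bound for g a
  have key : ∀ a ∈ Set.Ioo (0:ℝ) b,
      ((f a)⁻¹ - (f b)⁻¹) / b ≤ f' a / (f a) ^ 2 := by
    intro a ha
    have haε : a ∈ Set.Ioo (0:ℝ) ε := ⟨ha.1, lt_trans ha.2 hb.2⟩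
    have hsub : Set.Icc a b ⊆ Set.Ioo (0:ℝ) ε := fun x hx =>
      ⟨lt_of_lt_of_le ha.1 hx.1, lt_of_le_of_lt hx.2 hb.2⟩
    have hderiv' : ∀ x ∈ Set.Ioo a b,
        HasDerivAt (fun z => -(f z)⁻¹) (f' x / (f x) ^ 2) x := by
      intro x hx
      have hxε : x ∈ Set.Ioo (0:ℝ) ε := hsub ⟨hx.1.le, hx.2.le⟩
      have hfx := (hfpos x hxε).ne'
      have := ((hderiv x hxε).inv hfx).neg
      rw [neg_div, neg_neg] at this
      exact this
    have hcont : ContinuousOn (fun z => -(f z)⁻¹) (Set.Icc a b) := by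
      intro x hx
      exact (((hderiv x (hsub hx)).continuousAt.continuousWithinAt).inv₀
        (hfpos x (hsub hx)).ne').neg
    obtain ⟨c, hc, hceq⟩ := exists_hasDerivAt_eq_slope (fun z => -(f z)⁻¹)
      (fun x => f' x / (f x) ^ 2) ha.2 hcont hderiv'
    have hcε : c ∈ Set.Ioo (0:ℝ) ε := hsub ⟨hc.1.le, hc.2.le⟩
    have hgc0 : 0 ≤ f' c / (f c) ^ 2 := by
      have := hf'pos c hcε; have := hfpos c hcε; positivity
    have hac : f' c / (f c) ^ 2 ≤ f' a / (f a) ^ 2 :=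
      hganti ⟨haε.1, haε.2.le⟩ ⟨hcε.1, hcε.2.le⟩ hc.1.le
    have hga0 : 0 ≤ f' a / (f a) ^ 2 := le_trans hgc0 hac
    rw [div_le_iff₀ hb.1]
    have h1 : (f a)⁻¹ - (f b)⁻¹ = (f' c / (f c) ^ 2) * (b - a) := by
      have hba : (0:ℝ) < b - a := by linarith [ha.2]
      rw [hceq, div_mul_cancel₀ _ hba.ne']
      ring
    calc (f a)⁻¹ - (f b)⁻¹ = (f' c / (f c) ^ 2) * (b - a) := h1
      _ ≤ (f' a / (f a) ^ 2) * (b - a) := by nlinarith [ha.2]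
      _ ≤ (f' a / (f a) ^ 2) * b := by nlinarith [ha.1]
  -- 1/f → ∞
  have hmem : Set.Ioo (0:ℝ) b ∈ nhdsWithin (0:ℝ) (Set.Ioi 0) :=
    Ioo_mem_nhdsGT_of_mem ⟨le_refl 0, hb.1⟩
  have hf0' : Tendsto f (nhdsWithin 0 (Set.Ioi 0)) (nhdsWithin 0 (Set.Ioi 0)) := by
    rw [tendsto_nhdsWithin_iff]
    refine ⟨hf0, ?_⟩
    filter_upwards [hmem] with z hz
    exact hfpos z ⟨hz.1, lt_trans hz.2 hb.2⟩
  have hinv : Tendsto (fun z => (f z)⁻¹) (nhdsWithin 0 (Set.Ioi 0)) atTop :=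
    tendsto_inv_nhdsGT_zero.comp hf0'
  have hlow : Tendsto (fun z => ((f z)⁻¹ - (f b)⁻¹) / b)
      (nhdsWithin 0 (Set.Ioi 0)) atTop :=
    (hinv.atTop_add tendsto_const_nhds).atTop_div_const hb.1
  have hg : Tendsto (fun z => f' z / (f z) ^ 2) (nhdsWithin 0 (Set.Ioi 0)) atTop := by
    refine tendsto_atTop_mono' _ ?_ hlow
    filter_upwards [hmem] with z hz
    exact key z hz
  -- 1 - F → 1
  have hF' : Tendsto (fun z => 1 - F z) (nhdsWithin 0 (Set.Ioi 0)) (nhds 1) := by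
    have := (tendsto_const_nhds (x := (1:ℝ)) (f := nhdsWithin (0:ℝ) (Set.Ioi 0))).sub hF0
    simpa using this
  have := hg.atTop_mul_pos (by norm_num : (0:ℝ) < 1) hF'
  refine this.congr fun z => ?_
  ring
end
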